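/- Define the birational action of s_i (i mod 3) on parameters a_0,a_1,a_2 by s_i(a_i) = -a_i, s_i(a_{i±1}) = a_{i±1} + a_i, s_i(a_j) = a_j otherwise, and on variables f_0,f_1,f_2 by s_i(f_{i-1}) = f_{i-1} + 3a_i/f_i, s_i(f_{i+1}) = f_{i+1} - 3a_i/f_i, s_i(f_i) = f_i; define π(a_i) = a_{i+1}, π(f_i) = f_{i+1}. Then these actions satisfy s_i² = 1, (s_i s_{i±1})³ = 1, π s_i = s_{i+1} π, and π³ = 1 as birational transformations (i.e., as maps on the field of rational functions ℂ(a_0,a_1,a_2,f_0,f_1,f_2)). -/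

import Mathlib

open MvPolynomial

/-- The field of rational functions `ℂ(a_0,a_1,a_2,f_0,f_1,f_2)`. -/
abbrev K9 : Type := FractionRing (MvPolynomial (Fin 6) ℂ)

/-- The parameter `a_i` as an element of `ℂ(a_0,a_1,a_2,f_0,f_1,f_2)`. -/
noncomputable def aV (i : Fin 3) : K9 :=
  algebraMap (MvPolynomial (Fin 6) ℂ) K9 (X (Fin.castAdd 3 i))

/-- The variable `f_i` as an element of `ℂ(a_0,a_1,a_2,f_0,f_1,f_2)`. -/
noncomputable def fV (i : Fin 3) : K9 :=
  algebraMap (MvPolynomial (Fin 6) ℂ) K9 (X (Fin.natAdd 3 i))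

noncomputable section PIVAux

abbrev R6 : Type := MvPolynomial (Fin 6) ℂ

def ι9 : R6 →+* K9 := algebraMap R6 K9

lemma ι9_inj : Function.Injective ι9 := IsFractionRing.injective R6 K9

/-- coefficients for the a-action -/
def cC : Fin 3 → K9 := ![(-2 : K9), 1, 1]
/-- coefficients for the f-action -/
def dC : Fin 3 → K9 := ![(0 : K9), -1, 1]

def uS (i : Fin 3) : Fin 6 → K9 :=
  Fin.addCases (motive := fun _ => K9) (fun j => aV j + cC (j - i) * aV i)
               (fun j => fV j + dC (j - i) * (3 * aV i / fV i))

def φS (i : Fin 3) : R6 →+* K9 := eval₂Hom (ι9.comp MvPolynomial.C) (uS i)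

lemma φS_a (i j : Fin 3) : φS i (X (Fin.castAdd 3 j)) = aV j + cC (j - i) * aV i := by
  simp only [φS, eval₂Hom_X']
  exact Fin.addCases_left j

lemma φS_f (i j : Fin 3) : φS i (X (Fin.natAdd 3 j)) = fV j + dC (j - i) * (3 * aV i / fV i) := by
  simp only [φS, eval₂Hom_X']
  exact Fin.addCases_right j

lemma φS_C (i : Fin 3) (c : ℂ) : φS i (MvPolynomial.C c) = ι9 (MvPolynomial.C c) := by
  simp [φS]

end PIVAux

set_option maxHeartbeats 1000000
set_option synthInstance.maxHeartbeats 400000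

noncomputable section PIVInj

open IsLocalization

def qP (i : Fin 3) : R6 := X (Fin.natAdd 3 i)

abbrev Li (i : Fin 3) : Type := Localization.Away (qP i)

lemma qP_ne (i : Fin 3) : qP i ≠ 0 := MvPolynomial.X_ne_zero _

lemma κL_inj (i : Fin 3) : Function.Injective (algebraMap R6 (Li i)) :=
  IsLocalization.injective (Li i)
    (powers_le_nonZeroDivisors_of_noZeroDivisors (qP_ne i))

def ccZ : Fin 3 → ℤ := ![-2, 1, 1]
def ddZ : Fin 3 → ℤ := ![0, -1, 1]

def wS (i : Fin 3) : Fin 6 → Li i :=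
  Fin.addCases (motive := fun _ => Li i)
    (fun j => algebraMap R6 (Li i) (X (Fin.castAdd 3 j))
      + (ccZ (j - i) : Li i) * algebraMap R6 (Li i) (X (Fin.castAdd 3 i)))
    (fun j => algebraMap R6 (Li i) (X (Fin.natAdd 3 j)) +
      (ddZ (j - i) : Li i) * (3 * algebraMap R6 (Li i) (X (Fin.castAdd 3 i))
        * IsLocalization.Away.invSelf (qP i)))

def βS (i : Fin 3) : R6 →+* Li i := eval₂Hom ((algebraMap R6 (Li i)).comp MvPolynomial.C) (wS i)

lemma βS_C (i : Fin 3) (c : ℂ) : βS i (MvPolynomial.C c) = algebraMap R6 (Li i) (MvPolynomial.C c) := by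
  simp [βS]

lemma βS_a (i j : Fin 3) : βS i (X (Fin.castAdd 3 j))
    = algebraMap R6 (Li i) (X (Fin.castAdd 3 j))
      + (ccZ (j - i) : Li i) * algebraMap R6 (Li i) (X (Fin.castAdd 3 i)) := by
  simp only [βS, eval₂Hom_X']
  exact Fin.addCases_left j

lemma βS_f (i j : Fin 3) : βS i (X (Fin.natAdd 3 j))
    = algebraMap R6 (Li i) (X (Fin.natAdd 3 j)) +
      (ddZ (j - i) : Li i) * (3 * algebraMap R6 (Li i) (X (Fin.castAdd 3 i))
        * IsLocalization.Away.invSelf (qP i)) := by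
  simp only [βS, eval₂Hom_X']
  exact Fin.addCases_right j

lemma ccZ_zero : ccZ 0 = -2 := rfl
lemma ddZ_zero : ddZ 0 = 0 := rfl

lemma βS_q (i : Fin 3) : βS i (qP i) = algebraMap R6 (Li i) (qP i) := by
  rw [show βS i (qP i) = βS i (X (Fin.natAdd 3 i)) from rfl, βS_f, sub_self, ddZ_zero]
  push_cast
  rw [zero_mul, add_zero]
  rfl

lemma βS_q_isUnit (i : Fin 3) : IsUnit (βS i (qP i)) := by
  rw [βS_q]
  exact IsLocalization.map_units (M := Submonoid.powers (qP i)) (Li i)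
    ⟨qP i, Submonoid.mem_powers _⟩

def BS (i : Fin 3) : Li i →+* Li i := IsLocalization.Away.lift (qP i) (βS_q_isUnit i)

lemma BS_comp (i : Fin 3) : (BS i).comp (algebraMap R6 (Li i)) = βS i :=
  IsLocalization.Away.lift_comp (x := qP i) (hg := βS_q_isUnit i)

lemma BS_κ (i : Fin 3) (x : R6) : BS i (algebraMap R6 (Li i) x) = βS i x :=
  RingHom.congr_fun (BS_comp i) x

lemma BS_inv (i : Fin 3) :
    BS i (IsLocalization.Away.invSelf (qP i)) = IsLocalization.Away.invSelf (qP i) := by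
  have h1 : algebraMap R6 (Li i) (qP i) * IsLocalization.Away.invSelf (qP i) = 1 :=
    IsLocalization.Away.mul_invSelf _
  have h2 := congrArg (BS i) h1
  rw [map_mul, map_one, BS_κ, βS_q] at h2
  exact (IsLocalization.map_units (M := Submonoid.powers (qP i)) (Li i)
    ⟨qP i, Submonoid.mem_powers _⟩).mul_left_cancel
    (h2.trans h1.symm)

lemma BS_BS (i : Fin 3) : (BS i).comp (BS i) = RingHom.id (Li i) := by
  apply IsLocalization.ringHom_ext (Submonoid.powers (qP i))
  rw [RingHom.comp_assoc, BS_comp]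
  apply MvPolynomial.ringHom_ext
  · intro c
    simp only [RingHom.comp_apply, RingHom.id_apply]
    rw [βS_C, BS_κ, βS_C]
  · intro v
    simp only [RingHom.comp_apply, RingHom.id_apply]
    refine Fin.addCases (motive := fun v : Fin (3+3) =>
      BS i (βS i (X v)) = algebraMap R6 (Li i) (X v)) (fun j => ?_) (fun j => ?_) v
    · show BS i (βS i (X (Fin.castAdd 3 j))) = algebraMap R6 (Li i) (X (Fin.castAdd 3 j))
      simp only [βS_a, βS_f, map_add, map_mul, map_intCast, map_ofNat, BS_κ, BS_inv,
        sub_self, ccZ_zero, ddZ_zero]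
      push_cast
      ring
    · show BS i (βS i (X (Fin.natAdd 3 j))) = algebraMap R6 (Li i) (X (Fin.natAdd 3 j))
      simp only [βS_a, βS_f, map_add, map_mul, map_intCast, map_ofNat, BS_κ, BS_inv,
        sub_self, ccZ_zero, ddZ_zero]
      push_cast
      ring

lemma BS_inj (i : Fin 3) : Function.Injective (BS i) :=
  Function.Involutive.injective (fun x => RingHom.congr_fun (BS_BS i) x)

lemma βS_inj (i : Fin 3) : Function.Injective (βS i) := by
  rw [← BS_comp]
  exact (BS_inj i).comp (κL_inj i)

lemma ι9_q_ne (i : Fin 3) : ι9 (qP i) ≠ 0 :=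
  (map_ne_zero_iff ι9 ι9_inj).mpr (MvPolynomial.X_ne_zero _)

lemma ι9_q_isUnit (i : Fin 3) : IsUnit (ι9 (qP i)) :=
  isUnit_iff_ne_zero.mpr (ι9_q_ne i)

def jS (i : Fin 3) : Li i →+* K9 := IsLocalization.Away.lift (qP i) (g := ι9) (ι9_q_isUnit i)

lemma jS_comp (i : Fin 3) : (jS i).comp (algebraMap R6 (Li i)) = ι9 :=
  IsLocalization.Away.lift_comp (x := qP i) (hg := ι9_q_isUnit i)

lemma jS_κ (i : Fin 3) (x : R6) : jS i (algebraMap R6 (Li i) x) = ι9 x :=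
  RingHom.congr_fun (jS_comp i) x

lemma jS_inv (i : Fin 3) :
    jS i (IsLocalization.Away.invSelf (qP i)) = (ι9 (qP i))⁻¹ := by
  have h1 : algebraMap R6 (Li i) (qP i) * IsLocalization.Away.invSelf (qP i) = 1 :=
    IsLocalization.Away.mul_invSelf _
  have h2 := congrArg (jS i) h1
  rw [map_mul, map_one, jS_κ] at h2
  exact (inv_eq_of_mul_eq_one_right h2).symm

lemma jS_inj (i : Fin 3) : Function.Injective (jS i) := by
  haveI : IsDomain (Li i) := IsLocalization.isDomain_localization
    (powers_le_nonZeroDivisors_of_noZeroDivisors (qP_ne i))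
  rw [injective_iff_map_eq_zero]
  intro x hx
  obtain ⟨⟨r, m⟩, e⟩ := IsLocalization.surj (Submonoid.powers (qP i)) x
  have h2 := congrArg (jS i) e
  rw [map_mul, hx, zero_mul, jS_κ] at h2
  have hr : r = 0 := ι9_inj (by simpa using h2.symm)
  rw [hr, map_zero] at e
  have hm : algebraMap R6 (Li i) (m : R6) ≠ 0 :=
    (IsLocalization.map_units (Li i) m).ne_zero
  exact (mul_eq_zero.mp e).resolve_right hm

end PIVInj

noncomputable section PIVAut

lemma cC_cast (k : Fin 3) : ((ccZ k : ℤ) : K9) = cC k := by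
  fin_cases k <;> norm_num [ccZ, cC]

lemma dC_cast (k : Fin 3) : ((ddZ k : ℤ) : K9) = dC k := by
  fin_cases k <;> norm_num [ddZ, dC]

lemma fV_eq_ι9 (i : Fin 3) : fV i = ι9 (qP i) := rfl

lemma fV_ne (i : Fin 3) : fV i ≠ 0 := ι9_q_ne i

lemma φS_eq (i : Fin 3) : φS i = (jS i).comp (βS i) := by
  apply MvPolynomial.ringHom_ext
  · intro c
    rw [φS_C, RingHom.comp_apply, βS_C, jS_κ]
  · intro v
    rw [RingHom.comp_apply]
    refine Fin.addCases (motive := fun v : Fin (3+3) =>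
      φS i (X v) = jS i (βS i (X v))) (fun j => ?_) (fun j => ?_) v
    · show φS i (X (Fin.castAdd 3 j)) = jS i (βS i (X (Fin.castAdd 3 j)))
      rw [φS_a, βS_a, map_add, map_mul, jS_κ, jS_κ, map_intCast, cC_cast]
      rfl
    · show φS i (X (Fin.natAdd 3 j)) = jS i (βS i (X (Fin.natAdd 3 j)))
      rw [φS_f, βS_f, map_add, map_mul, map_mul, map_mul, jS_κ, jS_κ, map_intCast,
        dC_cast, jS_inv, map_ofNat]
      rw [← fV_eq_ι9]
      show _ = fV j + dC (j - i) * (3 * aV i * (fV i)⁻¹)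
      rw [mul_div_assoc, div_eq_mul_inv]
      ring

lemma φS_inj (i : Fin 3) : Function.Injective (φS i) := by
  rw [φS_eq]
  exact (jS_inj i).comp (βS_inj i)

def ΦS (i : Fin 3) : K9 →+* K9 := IsFractionRing.lift (φS_inj i)

lemma ΦS_ι9 (i : Fin 3) (x : R6) : ΦS i (ι9 x) = φS i x :=
  IsFractionRing.lift_algebraMap _ _

lemma ΦS_C (i : Fin 3) (c : ℂ) : ΦS i (ι9 (MvPolynomial.C c)) = ι9 (MvPolynomial.C c) := by
  rw [ΦS_ι9, φS_C]

lemma ΦS_a (i j : Fin 3) : ΦS i (aV j) = aV j + cC (j - i) * aV i := by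
  rw [aV]; rw [show algebraMap R6 K9 = ι9 from rfl, ΦS_ι9, φS_a]; rfl

lemma ΦS_f (i j : Fin 3) : ΦS i (fV j) = fV j + dC (j - i) * (3 * aV i / fV i) := by
  rw [fV]; rw [show algebraMap R6 K9 = ι9 from rfl, ΦS_ι9, φS_f]; rfl

lemma ΦS_cC (i : Fin 3) (k : Fin 3) : ΦS i (cC k) = cC k := by
  fin_cases k <;> simp [cC, map_ofNat]

lemma ΦS_dC (i : Fin 3) (k : Fin 3) : ΦS i (dC k) = dC k := by
  fin_cases k <;> simp [dC, map_ofNat]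

lemma cC_zero : cC 0 = -2 := rfl
lemma dC_zero : dC 0 = 0 := rfl

/-- extensionality for ring homs on K9 -/
lemma K9_hom_ext {g h : K9 →+* K9}
    (hC : ∀ c : ℂ, g (ι9 (MvPolynomial.C c)) = h (ι9 (MvPolynomial.C c)))
    (ha : ∀ j : Fin 3, g (aV j) = h (aV j))
    (hf : ∀ j : Fin 3, g (fV j) = h (fV j)) : g = h := by
  apply IsLocalization.ringHom_ext (nonZeroDivisors R6)
  apply MvPolynomial.ringHom_ext
  · intro c
    exact hC c
  · intro v
    refine Fin.addCases (motive := fun v : Fin (3+3) =>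
      (g.comp (algebraMap R6 K9)) (X v) = (h.comp (algebraMap R6 K9)) (X v))
      (fun j => ha j) (fun j => hf j) v

lemma ΦS_ΦS (i : Fin 3) : (ΦS i).comp (ΦS i) = RingHom.id K9 := by
  apply K9_hom_ext
  · intro c
    simp only [RingHom.comp_apply, RingHom.id_apply, ΦS_C]
  · intro j
    simp only [RingHom.comp_apply, RingHom.id_apply, map_add, map_mul, ΦS_a, ΦS_cC, sub_self,
      cC_zero]
    ring
  · intro j
    simp only [RingHom.comp_apply, RingHom.id_apply, map_add, map_mul, map_div₀, map_ofNat,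
      ΦS_f, ΦS_a, ΦS_cC, ΦS_dC, sub_self, cC_zero, dC_zero]
    ring

def sE (i : Fin 3) : K9 ≃+* K9 :=
  { toFun := ΦS i
    invFun := ΦS i
    left_inv := fun x => RingHom.congr_fun (ΦS_ΦS i) x
    right_inv := fun x => RingHom.congr_fun (ΦS_ΦS i) x
    map_mul' := map_mul (ΦS i)
    map_add' := map_add (ΦS i) }

lemma sE_apply (i : Fin 3) (x : K9) : sE i x = ΦS i x := rfl

end PIVAut

noncomputable section PIVPi

def ePerm : Equiv.Perm (Fin 6) :=
  ⟨![1, 2, 0, 4, 5, 3], ![2, 0, 1, 5, 3, 4], by decide, by decide⟩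

def φP : R6 →+* K9 := ι9.comp (MvPolynomial.rename (⇑ePerm) : R6 →ₐ[ℂ] R6).toRingHom

lemma φP_inj : Function.Injective φP :=
  ι9_inj.comp (MvPolynomial.rename_injective _ ePerm.injective)

def ΦP : K9 →+* K9 := IsFractionRing.lift φP_inj

lemma ΦP_ι9 (x : R6) : ΦP (ι9 x) = φP x :=
  IsFractionRing.lift_algebraMap _ _

lemma ΦP_C (c : ℂ) : ΦP (ι9 (MvPolynomial.C c)) = ι9 (MvPolynomial.C c) := by
  rw [ΦP_ι9, φP]
  simp

lemma eP_a (j : Fin 3) : ePerm (Fin.castAdd 3 j) = Fin.castAdd 3 (j + 1) := by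
  fin_cases j <;> rfl

lemma eP_f (j : Fin 3) : ePerm (Fin.natAdd 3 j) = Fin.natAdd 3 (j + 1) := by
  fin_cases j <;> rfl

lemma ΦP_a (j : Fin 3) : ΦP (aV j) = aV (j + 1) := by
  rw [aV, show algebraMap R6 K9 = ι9 from rfl, ΦP_ι9, φP]
  simp only [RingHom.comp_apply, AlgHom.toRingHom_eq_coe, RingHom.coe_coe, rename_X, eP_a]
  rfl

lemma ΦP_f (j : Fin 3) : ΦP (fV j) = fV (j + 1) := by
  rw [fV, show algebraMap R6 K9 = ι9 from rfl, ΦP_ι9, φP]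
  simp only [RingHom.comp_apply, AlgHom.toRingHom_eq_coe, RingHom.coe_coe, rename_X, eP_f]
  rfl

lemma ΦP_cC (k : Fin 3) : ΦP (cC k) = cC k := by
  fin_cases k <;> simp [cC, map_ofNat]

lemma ΦP_dC (k : Fin 3) : ΦP (dC k) = dC k := by
  fin_cases k <;> simp [dC, map_ofNat]

lemma fin3_add3 : ∀ j : Fin 3, j + 1 + 1 + 1 = j := by decide

lemma ΦP_ΦP_ΦP : ΦP.comp (ΦP.comp ΦP) = RingHom.id K9 := by
  apply K9_hom_ext
  · intro c
    simp only [RingHom.comp_apply, RingHom.id_apply, ΦP_C]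
  · intro j
    simp only [RingHom.comp_apply, RingHom.id_apply, ΦP_a, fin3_add3]
  · intro j
    simp only [RingHom.comp_apply, RingHom.id_apply, ΦP_f, fin3_add3]

def pE : K9 ≃+* K9 :=
  { toFun := ΦP
    invFun := ΦP.comp ΦP
    left_inv := fun x => RingHom.congr_fun ΦP_ΦP_ΦP x
    right_inv := fun x => by
      have := RingHom.congr_fun ΦP_ΦP_ΦP x
      simpa using this
    map_mul' := map_mul ΦP
    map_add' := map_add ΦP }

lemma pE_apply (x : K9) : pE x = ΦP x := rfl

lemma ΦP_ΦS (i : Fin 3) : ΦP.comp (ΦS i) = (ΦS (i + 1)).comp ΦP := by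
  apply K9_hom_ext
  · intro c
    simp only [RingHom.comp_apply, ΦP_C, ΦS_C]
  · intro j
    simp only [RingHom.comp_apply, map_add, map_mul, ΦS_a, ΦP_a, ΦP_cC,
      add_sub_add_right_eq_sub]
  · intro j
    simp only [RingHom.comp_apply, map_add, map_mul, map_div₀, map_ofNat, ΦS_f, ΦP_f, ΦP_a,
      ΦP_dC, add_sub_add_right_eq_sub]

end PIVPi

noncomputable section PIVBraid

lemma cC_one : cC 1 = 1 := rfl
lemma cC_two : cC 2 = 1 := rfl
lemma dC_one : dC 1 = -1 := rfl
lemma dC_two : dC 2 = 1 := rfl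

lemma sa0 (i : Fin 3) : ΦS i (aV i) = -aV i := by
  rw [ΦS_a, sub_self, cC_zero]; ring

lemma sa1 (i : Fin 3) : ΦS i (aV (i + 1)) = aV (i + 1) + aV i := by
  rw [ΦS_a, add_sub_cancel_left, cC_one, one_mul]

lemma sa2 (i : Fin 3) : ΦS i (aV (i + 2)) = aV (i + 2) + aV i := by
  rw [ΦS_a, add_sub_cancel_left, cC_two, one_mul]

lemma sf0 (i : Fin 3) : ΦS i (fV i) = fV i := by
  rw [ΦS_f, sub_self, dC_zero]; ring

lemma sf1 (i : Fin 3) : ΦS i (fV (i + 1)) = fV (i + 1) - 3 * aV i / fV i := by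
  rw [ΦS_f, add_sub_cancel_left, dC_one]; ring

lemma sf2 (i : Fin 3) : ΦS i (fV (i + 2)) = fV (i + 2) + 3 * aV i / fV i := by
  rw [ΦS_f, add_sub_cancel_left, dC_two]; ring

lemma fin3_12 : ∀ i : Fin 3, i + 1 + 2 = i := by decide
lemma fin3_21 : ∀ i : Fin 3, i + 2 + 1 = i := by decide
lemma fin3_11 : ∀ i : Fin 3, i + 1 + 1 = i + 2 := by decide
lemma fin3_22 : ∀ i : Fin 3, i + 2 + 2 = i + 1 := by decide

lemma ta0 (i : Fin 3) : ΦS (i + 1) (aV i) = aV i + aV (i + 1) := by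
  have h := sa2 (i + 1); rwa [fin3_12] at h

lemma ta2 (i : Fin 3) : ΦS (i + 1) (aV (i + 2)) = aV (i + 2) + aV (i + 1) := by
  have h := sa1 (i + 1); rwa [fin3_11] at h

lemma tf0 (i : Fin 3) : ΦS (i + 1) (fV i) = fV i + 3 * aV (i + 1) / fV (i + 1) := by
  have h := sf2 (i + 1); rwa [fin3_12] at h

lemma tf2 (i : Fin 3) : ΦS (i + 1) (fV (i + 2)) = fV (i + 2) - 3 * aV (i + 1) / fV (i + 1) := by
  have h := sf1 (i + 1); rwa [fin3_11] at h

lemma sE_ne_zero (i : Fin 3) {x : K9} (hx : x ≠ 0) : ΦS i x ≠ 0 := fun h =>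
  hx ((sE i).injective (by rw [sE_apply, h, map_zero]))

lemma g1_ne (i : Fin 3) : fV i * fV (i + 1) - 3 * aV i ≠ 0 := by
  have h : fV i * fV (i + 1) - 3 * aV i = fV i * ΦS i (fV (i + 1)) := by
    rw [sf1]
    field_simp [fV_ne i]
  rw [h]
  exact mul_ne_zero (fV_ne i) (sE_ne_zero i (fV_ne (i + 1)))

lemma g2_ne (i : Fin 3) : fV i * fV (i + 1) + 3 * aV (i + 1) ≠ 0 := by
  have h : fV i * fV (i + 1) + 3 * aV (i + 1) = fV (i + 1) * ΦS (i + 1) (fV i) := by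
    rw [tf0]
    field_simp [fV_ne (i + 1)]
  rw [h]
  exact mul_ne_zero (fV_ne (i + 1)) (sE_ne_zero (i + 1) (fV_ne i))

lemma fin3_trich : ∀ i j : Fin 3, j = i ∨ j = i + 1 ∨ j = i + 2 := by decide

set_option maxHeartbeats 4000000 in
lemma sts_eq_tst (i : Fin 3) :
    (ΦS i).comp ((ΦS (i + 1)).comp (ΦS i)) = (ΦS (i + 1)).comp ((ΦS i).comp (ΦS (i + 1))) := by
  have n0 : fV i ≠ 0 := fV_ne i
  have n1 : fV (i + 1) ≠ 0 := fV_ne (i + 1)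
  have hg1 : fV i * fV (i + 1) - 3 * aV i ≠ 0 := g1_ne i
  have hg2 : fV i * fV (i + 1) + 3 * aV (i + 1) ≠ 0 := g2_ne i
  have hr1 : fV (i + 1) * fV i - 3 * aV i ≠ 0 := by
    intro h; apply g1_ne i; linear_combination h
  have hr2 : fV (i + 1) * (fV i * fV (i + 1) + 3 * aV (i + 1))
      - 3 * (aV i + aV (i + 1)) * fV (i + 1) ≠ 0 := by
    intro h; apply mul_ne_zero n1 (g1_ne i); linear_combination h
  have hr3 : fV (i + 1) * fV i ^ 2 + fV i * aV (i + 1) * 3 ≠ 0 := by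
    intro h; apply mul_ne_zero n0 (g2_ne i); linear_combination h
  have hr4 : fV i * aV (i + 1) * 3 + fV i ^ 2 * fV (i + 1) ≠ 0 := by
    intro h; apply mul_ne_zero n0 (g2_ne i); linear_combination h
  have hq1 : fV i * fV (i + 1) - aV i * 3 ≠ 0 := by
    intro h; apply g1_ne i; linear_combination h
  have hq2 : fV (i + 1) * fV i + aV (i + 1) * 3 ≠ 0 := by
    intro h; apply g2_ne i; linear_combination h
  have hq3 : fV (i + 1) * fV i - aV i * 3 ≠ 0 := by
    intro h; apply g1_ne i; linear_combination h
  apply K9_hom_ext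
  · intro c
    simp only [RingHom.comp_apply, ΦS_C]
  · intro j
    rcases fin3_trich i j with rfl | rfl | rfl <;>
    · simp only [RingHom.comp_apply, map_add, map_sub, map_mul, map_div₀, map_neg, map_ofNat,
        sa0, sa1, sa2, sf0, sf1, sf2, ta0, ta2, tf0, tf2]
      field_simp [n0, n1, hg1, hg2, hr1, hr2]
      try ring
  · intro j
    rcases fin3_trich i j with rfl | rfl | rfl
    · simp only [RingHom.comp_apply, map_add, map_sub, map_mul, map_div₀, map_neg, map_ofNat,
        sa0, sa1, sa2, sf0, sf1, sf2, ta0, ta2, tf0, tf2]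
      field_simp [n0, n1, hg1, hg2, hr1, hr2, hq1]
      ring_nf
      field_simp [n0, n1, hq1, hq2, hq3]
      ring
    · simp only [RingHom.comp_apply, map_add, map_sub, map_mul, map_div₀, map_neg, map_ofNat,
        sa0, sa1, sa2, sf0, sf1, sf2, ta0, ta2, tf0, tf2]
      field_simp [n0, n1, hg1, hg2, hr1, hr2, hr3, hq2]
      ring_nf
      field_simp [n0, n1, hq1, hq2, hq3]
      ring
    · simp only [RingHom.comp_apply, map_add, map_sub, map_mul, map_div₀, map_neg, map_ofNat,
        sa0, sa1, sa2, sf0, sf1, sf2, ta0, ta2, tf0, tf2]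
      field_simp [n0, n1, hg1, hg2, hr1, hr2, hr3, hq2, hq3]
      ring_nf
      field_simp [n0, n1, hq1, hq2, hq3]
      ring

noncomputable section PIVFinal

lemma hss (i : Fin 3) (x : K9) : ΦS i (ΦS i x) = x :=
  RingHom.congr_fun (ΦS_ΦS i) x

lemma hsts (i : Fin 3) (x : K9) :
    ΦS i (ΦS (i + 1) (ΦS i x)) = ΦS (i + 1) (ΦS i (ΦS (i + 1) x)) :=
  RingHom.congr_fun (sts_eq_tst i) x

lemma braid1 (i : Fin 3) (x : K9) :
    ΦS i (ΦS (i + 1) (ΦS i (ΦS (i + 1) (ΦS i (ΦS (i + 1) x))))) = x := by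
  rw [hsts]
  simp only [hss]

lemma braid1' (i : Fin 3) (x : K9) :
    ΦS (i + 1) (ΦS i (ΦS (i + 1) (ΦS i (ΦS (i + 1) (ΦS i x))))) = x := by
  apply (sE i).injective
  show ΦS i _ = ΦS i x
  exact braid1 i (ΦS i x)

lemma braid2 (i : Fin 3) (x : K9) :
    ΦS i (ΦS (i + 2) (ΦS i (ΦS (i + 2) (ΦS i (ΦS (i + 2) x))))) = x := by
  have h := braid1' (i + 2) x
  rwa [fin3_21] at h

lemma hps (i : Fin 3) (x : K9) : ΦP (ΦS i x) = ΦS (i + 1) (ΦP x) :=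
  RingHom.congr_fun (ΦP_ΦS i) x

lemma hppp (x : K9) : ΦP (ΦP (ΦP x)) = x :=
  RingHom.congr_fun ΦP_ΦP_ΦP x

end PIVFinal


/-- the birational actions `s_0, s_1, s_2, π` for P_IV, defined on the
generators by `s_i(a_i) = -a_i`, `s_i(a_{i±1}) = a_{i±1} + a_i`,
`s_i(f_{i+1}) = f_{i+1} - 3a_i/f_i`, `s_i(f_{i+2}) = f_{i+2} + 3a_i/f_i`,
`s_i(f_i) = f_i`, `π(a_i) = a_{i+1}`, `π(f_i) = f_{i+1}` (indices mod 3), exist as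
field automorphisms of `ℂ(a_0,a_1,a_2,f_0,f_1,f_2)` fixing `ℂ`, and satisfy the
fundamental relations `s_i² = 1`, `(s_i s_{i±1})³ = 1`, `π s_i = s_{i+1} π`, `π³ = 1`
of the extended affine Weyl group of type `A_2^{(1)}`. -/
theorem pIV_birational_weyl_relations :
    ∃ (s : Fin 3 → (K9 ≃+* K9)) (p : K9 ≃+* K9),
      (∀ (i : Fin 3) (c : ℂ),
        s i (algebraMap (MvPolynomial (Fin 6) ℂ) K9 (C c))
          = algebraMap (MvPolynomial (Fin 6) ℂ) K9 (C c)) ∧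
      (∀ c : ℂ,
        p (algebraMap (MvPolynomial (Fin 6) ℂ) K9 (C c))
          = algebraMap (MvPolynomial (Fin 6) ℂ) K9 (C c)) ∧
      (∀ i : Fin 3, s i (aV i) = -aV i) ∧
      (∀ i : Fin 3, s i (aV (i + 1)) = aV (i + 1) + aV i) ∧
      (∀ i : Fin 3, s i (aV (i + 2)) = aV (i + 2) + aV i) ∧
      (∀ i : Fin 3, s i (fV i) = fV i) ∧
      (∀ i : Fin 3, s i (fV (i + 1)) = fV (i + 1) - 3 * aV i / fV i) ∧
      (∀ i : Fin 3, s i (fV (i + 2)) = fV (i + 2) + 3 * aV i / fV i) ∧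
      (∀ i : Fin 3, p (aV i) = aV (i + 1)) ∧
      (∀ i : Fin 3, p (fV i) = fV (i + 1)) ∧
      (∀ (i : Fin 3) (x : K9), s i (s i x) = x) ∧
      (∀ (i : Fin 3) (x : K9),
        s i (s (i + 1) (s i (s (i + 1) (s i (s (i + 1) x))))) = x) ∧
      (∀ (i : Fin 3) (x : K9),
        s i (s (i + 2) (s i (s (i + 2) (s i (s (i + 2) x))))) = x) ∧
      (∀ (i : Fin 3) (x : K9), p (s i x) = s (i + 1) (p x)) ∧
      (∀ x : K9, p (p (p x)) = x) := by
  refine ⟨sE, pE, ?_, ?_, ?_, ?_, ?_, ?_, ?_, ?_, ?_, ?_, ?_, ?_, ?_, ?_, ?_⟩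
  · exact fun i c => ΦS_C i c
  · exact fun c => ΦP_C c
  · exact fun i => sa0 i
  · exact fun i => sa1 i
  · exact fun i => sa2 i
  · exact fun i => sf0 i
  · exact fun i => sf1 i
  · exact fun i => sf2 i
  · exact fun i => ΦP_a i
  · exact fun i => ΦP_f i
  · exact fun i x => hss i x
  · exact fun i x => braid1 i x
  · exact fun i x => braid2 i x
  · exact fun i x => hps i x
  · exact fun x => hppp x
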